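/- The formal power series χ(y) ∈ y·Q[[y]] with χ(0) = 0 satisfying the differential equation χ' = (1 + χ)/(1 + y − χ) also satisfies the functional equation (1 + χ)·log(1 + χ) = 2χ − y, where log(1+χ) is the formal logarithm. -/

import Mathlib

open PowerSeries

/-- The formal logarithm `log(1+u) = ∑_{k≥1} (-1)^{k+1} u^k / k` for a power series
`u` with vanishing constant term, over a `ℚ`-algebra. -/
noncomputable def logOnePlus {R : Type*} [CommRing R] [Algebra ℚ R]
    (u : PowerSeries R) : PowerSeries R :=
  PowerSeries.mk fun n =>
    ∑ k ∈ Finset.Icc 1 n, ((-1 : ℚ) ^ (k + 1) / (k : ℚ)) • (PowerSeries.coeff n (u ^ k))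

private lemma coeff_pow_zero_of_lt (u : PowerSeries ℚ) (h0 : PowerSeries.coeff 0 u = 0)
    {m k : ℕ} (h : m < k) : PowerSeries.coeff m (u ^ k) = 0 := by
  rw [coeff_zero_eq_constantCoeff] at h0
  have h1 : (X : PowerSeries ℚ) ∣ u := X_dvd_iff.mpr h0
  have h2 : (X : PowerSeries ℚ) ^ k ∣ u ^ k := pow_dvd_pow_of_dvd h1 k
  exact (X_pow_dvd_iff.mp h2) m h

/-- Truncated log series. -/
private noncomputable def LN (u : PowerSeries ℚ) (N : ℕ) : PowerSeries ℚ :=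
  ∑ k ∈ Finset.Icc 1 N, (((-1 : ℚ) ^ (k + 1) / (k : ℚ)) • u ^ k)

private lemma coeff_logOnePlus_eq (u : PowerSeries ℚ) (h0 : PowerSeries.coeff 0 u = 0)
    {m N : ℕ} (h : m ≤ N) :
    PowerSeries.coeff m (logOnePlus u) = PowerSeries.coeff m (LN u N) := by
  rw [logOnePlus, coeff_mk, LN, map_sum]
  simp only [map_smul]
  rw [Finset.sum_subset (Finset.Icc_subset_Icc_right h)]
  intro k hk hk'
  have hm : m < k := by
    simp only [Finset.mem_Icc, not_and, not_le] at hk'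
    simp only [Finset.mem_Icc] at hk
    exact hk' hk.1
  rw [coeff_pow_zero_of_lt u h0 hm, smul_zero]

private lemma deriv_LN (u : PowerSeries ℚ) (N : ℕ) :
    PowerSeries.derivativeFun (LN u N)
      = (∑ j ∈ Finset.range N, (-u) ^ j) * PowerSeries.derivativeFun u := by
  rw [LN]
  rw [show (PowerSeries.derivativeFun : PowerSeries ℚ → PowerSeries ℚ)
    = (PowerSeries.derivative ℚ : Derivation ℚ _ _) from rfl]
  rw [map_sum, Finset.sum_mul]
  rw [show Finset.Icc 1 N = Finset.Ico 1 (N + 1) by rw [Finset.Ico_add_one_right_eq_Icc],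
    Finset.sum_Ico_eq_sum_range]
  apply Finset.sum_congr rfl
  intro j _
  rw [Derivation.map_smul_of_tower, Derivation.leibniz_pow]
  have h1 : (1 + j) - 1 = j := by omega
  rw [h1, ← Nat.cast_smul_eq_nsmul ℚ, smul_smul]
  have h2 : ((-1 : ℚ) ^ (1 + j + 1) / ((1 + j : ℕ) : ℚ)) * ((1 + j : ℕ) : ℚ) = (-1) ^ j := by
    have hne : ((1 + j : ℕ) : ℚ) ≠ 0 := by exact Nat.cast_ne_zero.mpr (by omega)
    rw [div_mul_cancel₀ _ hne]
    have h3 : 1 + j + 1 = j + 2 := by omega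
    rw [h3, pow_add, neg_one_sq, mul_one]
  rw [h2, smul_eq_C_mul, map_pow, map_neg, map_one, neg_pow]
  have hD : (PowerSeries.derivative ℚ) u = PowerSeries.derivativeFun u := rfl
  rw [hD]
  rw [smul_eq_mul]
  ring

private lemma derivFun_sub (f g : PowerSeries ℚ) :
    PowerSeries.derivativeFun (f - g)
      = PowerSeries.derivativeFun f - PowerSeries.derivativeFun g := by
  ext n
  simp [PowerSeries.derivativeFun, PowerSeries.coeff_derivative, sub_mul]

private lemma dlog (u : PowerSeries ℚ) (h0 : PowerSeries.coeff 0 u = 0) :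
    PowerSeries.derivativeFun (logOnePlus u) * (1 + u) = PowerSeries.derivativeFun u := by
  ext n
  have hstep : PowerSeries.coeff n (PowerSeries.derivativeFun (logOnePlus u) * (1 + u))
      = PowerSeries.coeff n (PowerSeries.derivativeFun (LN u (n + 1)) * (1 + u)) := by
    rw [PowerSeries.coeff_mul, PowerSeries.coeff_mul]
    apply Finset.sum_congr rfl
    intro p hp
    have hp1 : p.1 + 1 ≤ n + 1 := by
      have := Finset.HasAntidiagonal.mem_antidiagonal.mp hp; omega
    change PowerSeries.coeff p.1 (PowerSeries.derivative ℚ (logOnePlus u)) * _ =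
      PowerSeries.coeff p.1 (PowerSeries.derivative ℚ (LN u (n + 1))) * _
    rw [PowerSeries.coeff_derivativeFun, PowerSeries.coeff_derivativeFun,
      coeff_logOnePlus_eq u h0 hp1]
  rw [hstep, deriv_LN]
  have geom : (∑ j ∈ Finset.range (n + 1), (-u) ^ j) * (1 + u) = 1 - (-u) ^ (n + 1) := by
    have hgs := geom_sum_mul (-u) (n + 1)
    linear_combination -hgs
  have hrearr : (∑ j ∈ Finset.range (n + 1), (-u) ^ j) * PowerSeries.derivativeFun u * (1 + u)
      = PowerSeries.derivativeFun u - (-u) ^ (n + 1) * PowerSeries.derivativeFun u := by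
    linear_combination PowerSeries.derivativeFun u * geom
  rw [hrearr, map_sub]
  have hz : PowerSeries.coeff n ((-u) ^ (n + 1) * PowerSeries.derivativeFun u) = 0 := by
    rw [PowerSeries.coeff_mul]
    apply Finset.sum_eq_zero
    intro p hp
    have hp1 : p.1 < n + 1 := by
      have := Finset.HasAntidiagonal.mem_antidiagonal.mp hp; omega
    have h0' : PowerSeries.coeff 0 (-u) = 0 := by rw [map_neg, h0, neg_zero]
    rw [coeff_pow_zero_of_lt (-u) h0' hp1, zero_mul]
  rw [hz, sub_zero]

theorem ode_implies_manin_equation (χ : PowerSeries ℚ)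
    (h0 : PowerSeries.coeff 0 χ = 0)
    (hode : PowerSeries.derivativeFun χ = (1 + χ) * (1 + PowerSeries.X - χ)⁻¹) :
    (1 + χ) * logOnePlus χ = 2 * χ - PowerSeries.X := by
  have h0c : PowerSeries.constantCoeff χ = 0 := by
    rw [← PowerSeries.coeff_zero_eq_constantCoeff]; exact h0
  have hBc : PowerSeries.constantCoeff (1 + PowerSeries.X - χ) ≠ 0 := by
    simp [h0c]
  have hBinv : (1 + PowerSeries.X - χ) * (1 + PowerSeries.X - χ)⁻¹ = 1 :=
    PowerSeries.mul_inv_cancel _ hBc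
  have hode' : PowerSeries.derivativeFun χ * (1 + PowerSeries.X - χ) = 1 + χ := by
    rw [hode, mul_assoc, mul_comm ((1 + PowerSeries.X - χ)⁻¹), hBinv, mul_one]
  have hdlog := dlog χ h0
  set L := logOnePlus χ with hLdef
  set F := (1 + χ) * L - (2 * χ - PowerSeries.X) with hF
  have hDX : PowerSeries.derivativeFun (PowerSeries.X : PowerSeries ℚ) = 1 :=
    PowerSeries.derivative_X
  have hD1χ : PowerSeries.derivativeFun (1 + χ) = PowerSeries.derivativeFun χ := by
    rw [PowerSeries.derivativeFun_add, PowerSeries.derivativeFun_one, zero_add]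
  have hDF : PowerSeries.derivativeFun F
      = PowerSeries.derivativeFun χ * L + (1 + χ) * PowerSeries.derivativeFun L
        - (2 * PowerSeries.derivativeFun χ - 1) := by
    rw [hF, derivFun_sub, derivFun_sub, hDX, PowerSeries.derivativeFun_mul, hD1χ,
      two_mul, PowerSeries.derivativeFun_add, smul_eq_mul, smul_eq_mul]
    ring
  have hFd : PowerSeries.derivativeFun F * (1 + PowerSeries.X - χ) = F := by
    rw [hDF, hF]
    linear_combination (L - 1) * hode' + (1 + PowerSeries.X - χ) * hdlog
  have hFd' : PowerSeries.derivativeFun F = F * (1 + PowerSeries.X - χ)⁻¹ := by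
    conv_rhs => rw [← hFd]
    rw [mul_assoc, hBinv, mul_one]
  have hz : ∀ n, PowerSeries.coeff n F = 0 := by
    intro n
    induction n using Nat.strong_induction_on with
    | _ n ih =>
      match n with
      | 0 =>
        have hL0 : PowerSeries.constantCoeff L = 0 := by
          rw [hLdef, ← PowerSeries.coeff_zero_eq_constantCoeff]
          simp [logOnePlus]
        rw [hF]
        simp only [map_sub, map_mul, PowerSeries.coeff_zero_eq_constantCoeff]
        simp [hL0, h0c]
      | Nat.succ n =>
        have h1 : PowerSeries.coeff n (PowerSeries.derivativeFun F)
            = PowerSeries.coeff (n + 1) F * (n + 1) :=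
          PowerSeries.coeff_derivativeFun F n
        rw [hFd', PowerSeries.coeff_mul] at h1
        rw [Finset.sum_eq_zero] at h1
        · have hne : ((n : ℚ) + 1) ≠ 0 := by positivity
          have := h1.symm
          push_cast at this
          exact (mul_eq_zero.mp this).resolve_right hne
        · intro p hp
          have hp1 : p.1 < n + 1 := by
            have := Finset.HasAntidiagonal.mem_antidiagonal.mp hp; omega
          rw [ih p.1 hp1, zero_mul]
  have hF0 : F = 0 := by
    ext n
    rw [hz n, map_zero]
  rw [hF] at hF0
  exact sub_eq_zero.mp hF0
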